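/- Let ω > 1 and set ρ₀ = arcsinh(1/√(ω² − 1)). Then ∫₀^{ρ₀} sinh²ρ · (1 − (ω² − 1) sinh²ρ)^{−1/2} dρ = (ω/(ω² − 1)) · E(1/ω²) − (1/ω) · K(1/ω²). (This evaluates the conserved spin of the folded closed GKP string/stringy membrane, after the overall factor ω, in terms of complete elliptic integrals.) -/

import Mathlib

noncomputable section

open Real

/-- Complete elliptic integral of the first kind,
K(m) = ∫₀^{π/2} (1 − m sin²θ)^{−1/2} dθ. -/
def ellK (m : ℝ) : ℝ := ∫ θ in (0:ℝ)..(π / 2), (Real.sqrt (1 - m * Real.sin θ ^ 2))⁻¹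

/-- Complete elliptic integral of the second kind,
E(m) = ∫₀^{π/2} (1 − m sin²θ)^{1/2} dθ. -/
def ellE (m : ℝ) : ℝ := ∫ θ in (0:ℝ)..(π / 2), Real.sqrt (1 - m * Real.sin θ ^ 2)


/-- The conserved spin integral of the folded closed GKP string/stringy
membrane (after the overall factor ω) evaluates in terms of complete elliptic integrals. -/
theorem gkp_spin_integral (ω : ℝ) (hω : 1 < ω) (ρ₀ : ℝ)
    (hρ₀ : ρ₀ = Real.arsinh (1 / Real.sqrt (ω ^ 2 - 1))) :
    ∫ ρ in (0:ℝ)..ρ₀,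
        Real.sinh ρ ^ 2 * (Real.sqrt (1 - (ω ^ 2 - 1) * Real.sinh ρ ^ 2))⁻¹
      = (ω / (ω ^ 2 - 1)) * ellE (1 / ω ^ 2) - (1 / ω) * ellK (1 / ω ^ 2) := by
  have hω0 : 0 < ω := lt_trans one_pos hω
  set c : ℝ := ω ^ 2 - 1 with hc_def
  have hc : 0 < c := by nlinarith
  set k : ℝ := Real.sqrt c with hk_def
  have hk : 0 < k := Real.sqrt_pos.mpr hc
  have hk2 : k ^ 2 = c := Real.sq_sqrt hc.le
  clear_value k c
  -- the integrand
  set F : ℝ → ℝ := fun ρ =>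
    Real.sinh ρ ^ 2 * (Real.sqrt (1 - c * Real.sinh ρ ^ 2))⁻¹ with hF_def
  -- the substitution
  set g : ℝ → ℝ := fun θ => Real.arsinh (Real.sin θ / k) with hg_def
  set g' : ℝ → ℝ := fun θ => Real.cos θ / Real.sqrt (c + Real.sin θ ^ 2) with hg'_def
  have hcsin : ∀ θ : ℝ, 0 < c + Real.sin θ ^ 2 := fun θ => by positivity
  have hderiv : ∀ θ : ℝ, HasDerivAt g (g' θ) θ := by
    intro θ
    have h1 : HasDerivAt (fun t => Real.sin t / k) (Real.cos θ / k) θ :=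
      (Real.hasDerivAt_sin θ).div_const k
    have h2 := (Real.hasDerivAt_arsinh (Real.sin θ / k)).comp θ h1
    refine h2.congr_deriv ?_
    have e1 : 1 + (Real.sin θ / k) ^ 2 = (c + Real.sin θ ^ 2) / c := by
      field_simp
      nlinarith [hk2]
    have e2 : Real.sqrt ((c + Real.sin θ ^ 2) / c) = Real.sqrt (c + Real.sin θ ^ 2) / k := by
      rw [Real.sqrt_div (hcsin θ).le, ← hk_def]
    have hs : (0:ℝ) < Real.sqrt (c + Real.sin θ ^ 2) := Real.sqrt_pos.mpr (hcsin θ)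
    rw [e1, e2]
    have hs' : Real.sqrt (c + Real.sin θ ^ 2) ≠ 0 := hs.ne'
    simp only [hg'_def]
    field_simp
  have hρ₀' : ρ₀ = Real.arsinh (1 / k) := hρ₀
  have hρ₀pos : 0 < ρ₀ := by
    rw [hρ₀']
    rw [show (0:ℝ) = Real.arsinh 0 from (Real.arsinh_zero).symm]
    rw [Real.arsinh_lt_arsinh]
    positivity
  -- image of the substitution
  have hmono : StrictMonoOn g (Set.Icc 0 (π / 2)) := by
    intro x hx y hy hxy
    simp only [hg_def]
    rw [Real.arsinh_lt_arsinh]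
    have hsx : Real.sin x < Real.sin y := by
      apply Real.strictMonoOn_sin _ _ hxy
      · constructor <;> [linarith [hx.1, pi_pos]; linarith [hx.2]]
      · constructor <;> [linarith [hy.1, pi_pos]; linarith [hy.2]]
    gcongr
  have hgcont : ContinuousOn g (Set.Icc 0 (π / 2)) :=
    (Real.continuous_arsinh.comp (Real.continuous_sin.div_const k)).continuousOn
  have hg0 : g 0 = 0 := by simp [hg_def]
  have hgpi : g (π / 2) = ρ₀ := by simp [hg_def, hρ₀']
  have himage : g '' Set.Ioo 0 (π / 2) = Set.Ioo 0 ρ₀ := by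
    apply Set.Subset.antisymm
    · rintro _ ⟨θ, hθ, rfl⟩
      have h1 : g 0 < g θ := hmono (by constructor <;> simp [le_refl, (by positivity : (0:ℝ) ≤ π/2)])
        (Set.mem_Icc_of_Ioo hθ) hθ.1
      have h2 : g θ < g (π / 2) := hmono (Set.mem_Icc_of_Ioo hθ)
        (by constructor <;> simp [le_refl, (by positivity : (0:ℝ) ≤ π/2)]) hθ.2
      rw [hg0] at h1; rw [hgpi] at h2
      exact ⟨h1, h2⟩
    · have := intermediate_value_Ioo (a := (0:ℝ)) (b := π / 2) (by positivity) hgcont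
      rw [hg0, hgpi] at this
      exact this
  have hinj : Set.InjOn g (Set.Ioo 0 (π / 2)) :=
    (hmono.injOn).mono Set.Ioo_subset_Icc_self
  -- step 1: change of variables
  have step1 : (∫ ρ in (0:ℝ)..ρ₀, F ρ)
      = ∫ θ in Set.Ioo 0 (π / 2), |g' θ| • F (g θ) := by
    rw [intervalIntegral.integral_of_le hρ₀pos.le,
      MeasureTheory.integral_Ioc_eq_integral_Ioo, ← himage]
    exact MeasureTheory.integral_image_eq_integral_abs_deriv_smul measurableSet_Ioo
      (fun x _ => (hderiv x).hasDerivWithinAt) hinj F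
  -- step 2: simplify the substituted integrand
  have step2 : (∫ θ in Set.Ioo 0 (π / 2), |g' θ| • F (g θ))
      = ∫ θ in Set.Ioo 0 (π / 2),
          Real.sin θ ^ 2 / (c * Real.sqrt (c + Real.sin θ ^ 2)) := by
    apply MeasureTheory.setIntegral_congr_fun measurableSet_Ioo
    intro θ hθ
    have hcos : 0 < Real.cos θ := Real.cos_pos_of_mem_Ioo
      ⟨by linarith [hθ.1, pi_pos], hθ.2⟩
    have hs : (0:ℝ) < Real.sqrt (c + Real.sin θ ^ 2) := Real.sqrt_pos.mpr (hcsin θ)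
    have hsinh : Real.sinh (g θ) = Real.sin θ / k := Real.sinh_arsinh _
    have hsinh2 : Real.sinh (g θ) ^ 2 = Real.sin θ ^ 2 / c := by
      rw [hsinh, div_pow, hk2]
    have hone : 1 - c * Real.sinh (g θ) ^ 2 = Real.cos θ ^ 2 := by
      rw [hsinh2, ← mul_div_assoc, mul_div_cancel_left₀ _ hc.ne', Real.cos_sq']
    have habs : |g' θ| = Real.cos θ / Real.sqrt (c + Real.sin θ ^ 2) :=
      abs_of_nonneg (div_nonneg hcos.le (Real.sqrt_nonneg _))
    simp only [hF_def, smul_eq_mul]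
    rw [habs, hone, hsinh2, Real.sqrt_sq hcos.le]
    field_simp [hcos.ne', hs.ne', hc.ne']
  -- step 3: back to an interval integral and reflect θ ↦ π/2 - θ
  have step3 : (∫ θ in Set.Ioo 0 (π / 2),
        Real.sin θ ^ 2 / (c * Real.sqrt (c + Real.sin θ ^ 2)))
      = ∫ θ in (0:ℝ)..(π / 2),
          Real.cos θ ^ 2 / (c * Real.sqrt (c + Real.cos θ ^ 2)) := by
    rw [← MeasureTheory.integral_Ioc_eq_integral_Ioo,
      ← intervalIntegral.integral_of_le (by positivity : (0:ℝ) ≤ π / 2)]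
    have := intervalIntegral.integral_comp_sub_left (a := (0:ℝ)) (b := π / 2)
      (fun θ => Real.sin θ ^ 2 / (c * Real.sqrt (c + Real.sin θ ^ 2))) (π / 2)
    simp only [sub_self, sub_zero, Real.sin_pi_div_two_sub] at this
    rw [← this]
  -- step 4: identify with the elliptic integrands
  have hm : (0:ℝ) < 1 / ω ^ 2 := by positivity
  have hm1 : 1 / ω ^ 2 < 1 := by
    rw [div_lt_one (by positivity)]; nlinarith
  have hdpos : ∀ θ : ℝ, 0 < 1 - 1 / ω ^ 2 * Real.sin θ ^ 2 := by
    intro θ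
    have h1 : Real.sin θ ^ 2 ≤ 1 := Real.sin_sq_le_one θ
    nlinarith
  have step4 : (∫ θ in (0:ℝ)..(π / 2),
        Real.cos θ ^ 2 / (c * Real.sqrt (c + Real.cos θ ^ 2)))
      = ∫ θ in (0:ℝ)..(π / 2),
          (ω / c * Real.sqrt (1 - 1 / ω ^ 2 * Real.sin θ ^ 2)
            - 1 / ω * (Real.sqrt (1 - 1 / ω ^ 2 * Real.sin θ ^ 2))⁻¹) := by
    apply intervalIntegral.integral_congr
    intro θ _
    have hd := hdpos θ
    have hds : (0:ℝ) < Real.sqrt (1 - 1 / ω ^ 2 * Real.sin θ ^ 2) := Real.sqrt_pos.mpr hd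
    have hd2 : Real.sqrt (1 - 1 / ω ^ 2 * Real.sin θ ^ 2) ^ 2
        = 1 - 1 / ω ^ 2 * Real.sin θ ^ 2 := Real.sq_sqrt hd.le
    have hcc : c + Real.cos θ ^ 2 = ω ^ 2 * (1 - 1 / ω ^ 2 * Real.sin θ ^ 2) := by
      rw [Real.cos_sq', hc_def]
      field_simp
      ring
    have hsq : Real.sqrt (c + Real.cos θ ^ 2)
        = ω * Real.sqrt (1 - 1 / ω ^ 2 * Real.sin θ ^ 2) := by
      rw [hcc, Real.sqrt_mul (by positivity), Real.sqrt_sq hω0.le]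
    simp only [hsq, Real.cos_sq']
    have key : ω / c * Real.sqrt (1 - 1 / ω ^ 2 * Real.sin θ ^ 2)
          - 1 / ω * (Real.sqrt (1 - 1 / ω ^ 2 * Real.sin θ ^ 2))⁻¹
        = (ω ^ 2 * Real.sqrt (1 - 1 / ω ^ 2 * Real.sin θ ^ 2) ^ 2 - c)
            / (c * (ω * Real.sqrt (1 - 1 / ω ^ 2 * Real.sin θ ^ 2))) := by
      have hX : (0:ℝ) < Real.sqrt (ω ^ 2 - Real.sin θ ^ 2) :=
        Real.sqrt_pos.mpr (by nlinarith [Real.sin_sq_le_one θ])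
      rw [eq_div_iff (mul_ne_zero hc.ne' (mul_ne_zero hω0.ne' hds.ne'))]
      generalize Real.sqrt (1 - 1 / ω ^ 2 * Real.sin θ ^ 2) = s at hds ⊢
      field_simp
    rw [key, hd2]
    have hωsq : (1:ℝ) / ω ^ 2 * ω ^ 2 = 1 := by field_simp
    congr 1
    · linear_combination Real.sin θ ^ 2 * hωsq + hc_def
    · rw [← Real.cos_sq', hsq]
  -- step 5: split the integral
  have hcontE : Continuous fun θ : ℝ => Real.sqrt (1 - 1 / ω ^ 2 * Real.sin θ ^ 2) :=
    Real.continuous_sqrt.comp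
      (continuous_const.sub (continuous_const.mul (Real.continuous_sin.pow 2)))
  have hcontK : Continuous fun θ : ℝ => (Real.sqrt (1 - 1 / ω ^ 2 * Real.sin θ ^ 2))⁻¹ :=
    hcontE.inv₀ fun θ => (Real.sqrt_pos.mpr (hdpos θ)).ne'
  have step5 : (∫ θ in (0:ℝ)..(π / 2),
        (ω / c * Real.sqrt (1 - 1 / ω ^ 2 * Real.sin θ ^ 2)
          - 1 / ω * (Real.sqrt (1 - 1 / ω ^ 2 * Real.sin θ ^ 2))⁻¹))
      = ω / c * ellE (1 / ω ^ 2) - 1 / ω * ellK (1 / ω ^ 2) := by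
    rw [intervalIntegral.integral_sub
      (show IntervalIntegrable (fun θ => ω / c * Real.sqrt (1 - 1 / ω ^ 2 * Real.sin θ ^ 2))
        MeasureTheory.volume 0 (π / 2) from (continuous_const.mul hcontE).intervalIntegrable _ _)
      (show IntervalIntegrable (fun θ => 1 / ω * (Real.sqrt (1 - 1 / ω ^ 2 * Real.sin θ ^ 2))⁻¹)
        MeasureTheory.volume 0 (π / 2) from (continuous_const.mul hcontK).intervalIntegrable _ _),
      intervalIntegral.integral_const_mul, intervalIntegral.integral_const_mul]
    simp only [ellE, ellK]
  calc (∫ ρ in (0:ℝ)..ρ₀, F ρ) = _ := step1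
    _ = _ := step2
    _ = _ := step3
    _ = _ := step4
    _ = ω / c * ellE (1 / ω ^ 2) - 1 / ω * ellK (1 / ω ^ 2) := step5
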